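/- Let Ê be a sublinear expectation, and let X, Y be real random variables with Ê[X] = Ê[−X] = 0, Ê[|X|^(2+α)] = M_X^(2+α) < ∞ for some α ∈ (0,1), Ê[|X|²] = M_X², Ê[|Y|²] = M_Y² < ∞. Let ψ : ℝ → ℝ be C² with bounded ψ, ψ', ψ'', and ψ'' α-Hölder continuous with seminorm [ψ'']_α. Define G(p, A) := Ê[pY + (1/2)A X²]. Then for all Δ ∈ (0,1) and x ∈ ℝ: |(Ê[ψ(x + √Δ X + Δ Y)] − ψ(x))/Δ − G(ψ'(x), ψ''(x))| ≤ Δ^(α/2)·[ψ'']_α·M_X^(2+α) + √Δ·‖ψ''‖_∞·(M_X² + M_Y²). -/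

import Mathlib

open Set

private lemma abs_sub_le_of_deriv_bound {f : ℝ → ℝ} (hf : Differentiable ℝ f)
    {C : ℝ} (hC : ∀ z, |deriv f z| ≤ C) (a b : ℝ) : |f b - f a| ≤ C * |b - a| := by
  have h := Convex.norm_image_sub_le_of_norm_hasDerivWithin_le
    (f := f) (f' := deriv f) (C := C) (s := univ)
    (fun z _ => (hf z).hasDerivAt.hasDerivWithinAt)
    (fun z _ => by simpa [Real.norm_eq_abs] using hC z) convex_univ (mem_univ a) (mem_univ b)
  simpa [Real.norm_eq_abs] using h

private lemma abs_mem_uIcc {u v : ℝ} (hv : v ∈ uIcc (0:ℝ) u) : |v| ≤ |u| := by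
  rw [Set.uIcc_eq_union] at hv
  rcases hv with hv | hv <;> rw [abs_le] <;>
    constructor <;> cases hv <;> nlinarith [le_abs_self u, neg_abs_le u, abs_nonneg u]

private lemma holder_taylor1 {g : ℝ → ℝ} (hg : Differentiable ℝ g)
    {H α : ℝ} (hα : 0 ≤ α) (hH0 : 0 ≤ H)
    (hH : ∀ z w, |deriv g z - deriv g w| ≤ H * |z - w| ^ α)
    (x u : ℝ) : |g (x + u) - g x - u * deriv g x| ≤ H * |u| ^ α * |u| := by
  set F : ℝ → ℝ := fun v => g (x + v) - v * deriv g x with hF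
  have hFd : ∀ v : ℝ, HasDerivAt F (deriv g (x + v) - deriv g x) v := by
    intro v
    have h1 : HasDerivAt (fun v : ℝ => x + v) 1 v := by
      simpa using (hasDerivAt_id v).const_add x
    have h2 : HasDerivAt (fun v : ℝ => g (x + v)) (deriv g (x + v) * 1) v :=
      (hg (x + v)).hasDerivAt.comp v h1
    have h3 : HasDerivAt (fun v : ℝ => v * deriv g x) (deriv g x) v := by
      simpa using (hasDerivAt_id v).mul_const (deriv g x)
    simpa [Pi.sub_def] using h2.sub h3
  have key := Convex.norm_image_sub_le_of_norm_hasDerivWithin_le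
    (f := F) (f' := fun v => deriv g (x + v) - deriv g x) (C := H * |u| ^ α)
    (s := uIcc (0:ℝ) u)
    (fun v _ => (hFd v).hasDerivWithinAt)
    (fun v hv => by
      have h1 : |v| ≤ |u| := abs_mem_uIcc hv
      have h2 := hH (x + v) x
      have h3 : |x + v - x| = |v| := by ring_nf
      rw [h3] at h2
      have h4 : |v| ^ α ≤ |u| ^ α := Real.rpow_le_rpow (abs_nonneg v) h1 hα
      calc ‖deriv g (x + v) - deriv g x‖ ≤ H * |v| ^ α := h2
        _ ≤ H * |u| ^ α := by nlinarith)
    (convex_uIcc 0 u) (left_mem_uIcc) (right_mem_uIcc)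
  have h5 : F u - F 0 = g (x + u) - g x - u * deriv g x := by simp [hF]; ring
  simpa [Real.norm_eq_abs, h5] using key

private lemma holder_taylor2 {ψ : ℝ → ℝ} (hψ1 : Differentiable ℝ ψ)
    (hψ2 : Differentiable ℝ (deriv ψ))
    {H α : ℝ} (hα : 0 ≤ α) (hH0 : 0 ≤ H)
    (hH : ∀ z w, |deriv (deriv ψ) z - deriv (deriv ψ) w| ≤ H * |z - w| ^ α)
    (x s : ℝ) :
    |ψ (x + s) - ψ x - s * deriv ψ x - s ^ 2 / 2 * deriv (deriv ψ) x|
      ≤ H * |s| ^ α * |s| * |s| := by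
  set F : ℝ → ℝ := fun v => ψ (x + v) - v * deriv ψ x - v ^ 2 / 2 * deriv (deriv ψ) x with hF
  have hFd : ∀ v : ℝ, HasDerivAt F (deriv ψ (x + v) - deriv ψ x - v * deriv (deriv ψ) x) v := by
    intro v
    have h1 : HasDerivAt (fun v : ℝ => x + v) 1 v := by
      simpa using (hasDerivAt_id v).const_add x
    have h2 : HasDerivAt (fun v : ℝ => ψ (x + v)) (deriv ψ (x + v) * 1) v :=
      (hψ1 (x + v)).hasDerivAt.comp v h1
    have h3 : HasDerivAt (fun v : ℝ => v * deriv ψ x) (deriv ψ x) v := by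
      simpa using (hasDerivAt_id v).mul_const (deriv ψ x)
    have h4 : HasDerivAt (fun v : ℝ => v ^ 2 / 2 * deriv (deriv ψ) x)
        (v * deriv (deriv ψ) x) v := by
      have h5 : HasDerivAt (fun v : ℝ => v ^ 2) (2 * v) v := by
        simpa using hasDerivAt_pow 2 v
      have h6 := (h5.div_const 2).mul_const (deriv (deriv ψ) x)
      refine h6.congr_deriv ?_
      ring
    simpa [Pi.sub_def] using (h2.sub h3).sub h4
  have key := Convex.norm_image_sub_le_of_norm_hasDerivWithin_le
    (f := F) (f' := fun v => deriv ψ (x + v) - deriv ψ x - v * deriv (deriv ψ) x)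
    (C := H * |s| ^ α * |s|) (s := uIcc (0:ℝ) s)
    (fun v _ => (hFd v).hasDerivWithinAt)
    (fun v hv => by
      have h1 : |v| ≤ |s| := abs_mem_uIcc hv
      have h2 := holder_taylor1 hψ2 hα hH0 hH x v
      have h4 : |v| ^ α ≤ |s| ^ α := Real.rpow_le_rpow (abs_nonneg v) h1 hα
      have h5 : (0:ℝ) ≤ |v| ^ α := Real.rpow_nonneg (abs_nonneg v) α
      have h6 : (0:ℝ) ≤ |s| ^ α := Real.rpow_nonneg (abs_nonneg s) α
      show ‖deriv ψ (x + v) - deriv ψ x - v * deriv (deriv ψ) x‖ ≤ H * |s| ^ α * |s|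
      rw [Real.norm_eq_abs]
      calc |deriv ψ (x + v) - deriv ψ x - v * deriv (deriv ψ) x|
          ≤ H * |v| ^ α * |v| := h2
        _ ≤ H * |s| ^ α * |s| :=
            mul_le_mul (mul_le_mul_of_nonneg_left h4 hH0) h1 (abs_nonneg v)
              (mul_nonneg hH0 h6))
    (convex_uIcc 0 s) (left_mem_uIcc) (right_mem_uIcc)
  have h5 : F s - F 0 = ψ (x + s) - ψ x - s * deriv ψ x - s ^ 2 / 2 * deriv (deriv ψ) x := by
    simp [hF]; ring
  simpa [Real.norm_eq_abs, h5] using key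

private lemma quad_bound {g : ℝ → ℝ} (hg : Differentiable ℝ g) (h0 : g 0 = 0)
    {L : ℝ} (hd : ∀ t ∈ Icc (0:ℝ) 1, |deriv g t| ≤ L * t) : |g 1| ≤ L / 2 := by
  have hL : 0 ≤ L := by
    have h1 := hd 1 ⟨zero_le_one, le_refl 1⟩
    have h2 := abs_nonneg (deriv g 1)
    nlinarith
  have key : ∀ σ : ℝ, |σ| = 1 → σ * g 1 ≤ L / 2 := by
    intro σ hσ
    set u : ℝ → ℝ := fun t => L / 2 * t ^ 2 - σ * g t with hu
    have hud : ∀ t : ℝ, HasDerivAt u (L * t - σ * deriv g t) t := by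
      intro t
      have h1 : HasDerivAt (fun t : ℝ => t ^ 2) (2 * t) t := by
        simpa using hasDerivAt_pow 2 t
      have h2 := (h1.const_mul (L / 2)).sub ((hg t).hasDerivAt.const_mul σ)
      refine h2.congr_deriv ?_
      ring
    have hmono : MonotoneOn u (Icc 0 1) := by
      apply monotoneOn_of_deriv_nonneg (convex_Icc 0 1)
      · exact (Differentiable.continuous fun t => (hud t).differentiableAt).continuousOn
      · exact fun t _ => ((hud t).differentiableAt).differentiableWithinAt
      · intro t ht
        rw [interior_Icc] at ht
        rw [(hud t).deriv]
        have h3 := hd t ⟨ht.1.le, ht.2.le⟩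
        have h4 : |σ * deriv g t| ≤ L * t := by rw [abs_mul, hσ, one_mul]; exact h3
        linarith [(abs_le.mp h4).2]
    have h5 := hmono (left_mem_Icc.mpr zero_le_one) (right_mem_Icc.mpr zero_le_one) zero_le_one
    simp only [hu, h0] at h5
    nlinarith
  have h1 := key 1 (by norm_num)
  have h2 := key (-1) (by norm_num)
  rw [abs_le]
  constructor <;> nlinarith

private lemma taylor1_half {ψ : ℝ → ℝ} (hψ1 : Differentiable ℝ ψ)
    (hψ2 : Differentiable ℝ (deriv ψ)) {C : ℝ}
    (hC : ∀ z, |deriv (deriv ψ) z| ≤ C) (a k : ℝ) :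
    |ψ (a + k) - ψ a - k * deriv ψ a| ≤ C * k ^ 2 / 2 := by
  set g : ℝ → ℝ := fun t => ψ (a + t * k) - ψ a - t * (k * deriv ψ a) with hgdef
  have hgd : ∀ t : ℝ, HasDerivAt g (deriv ψ (a + t * k) * k - k * deriv ψ a) t := by
    intro t
    have h1 : HasDerivAt (fun t : ℝ => a + t * k) k t := by
      simpa using ((hasDerivAt_id t).mul_const k).const_add a
    have h2 : HasDerivAt (fun t : ℝ => ψ (a + t * k)) (deriv ψ (a + t * k) * k) t :=
      (hψ1 (a + t * k)).hasDerivAt.comp t h1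
    have h3 : HasDerivAt (fun t : ℝ => t * (k * deriv ψ a)) (k * deriv ψ a) t := by
      simpa using (hasDerivAt_id t).mul_const (k * deriv ψ a)
    simpa [hgdef, sub_sub, Pi.sub_def] using (h2.sub (h3.const_add (ψ a)))
  have hgdiff : Differentiable ℝ g := fun t => (hgd t).differentiableAt
  have h0 : g 0 = 0 := by simp [hgdef]
  have hb : ∀ t ∈ Icc (0:ℝ) 1, |deriv g t| ≤ (C * k ^ 2) * t := by
    intro t ht
    rw [(hgd t).deriv]
    have h4 := abs_sub_le_of_deriv_bound hψ2 hC a (a + t * k)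
    have h5 : |a + t * k - a| = |t * k| := by ring_nf
    rw [h5] at h4
    have h6 : |deriv ψ (a + t * k) * k - k * deriv ψ a|
        = |deriv ψ (a + t * k) - deriv ψ a| * |k| := by
      rw [← abs_mul]; ring_nf
    rw [h6]
    have h7 : |t * k| = t * |k| := by rw [abs_mul, abs_of_nonneg ht.1]
    rw [h7] at h4
    have hC0 : 0 ≤ C := le_trans (abs_nonneg _) (hC 0)
    calc |deriv ψ (a + t * k) - deriv ψ a| * |k| ≤ C * (t * |k|) * |k| := by
          nlinarith [abs_nonneg k, abs_nonneg (deriv ψ (a + t * k) - deriv ψ a)]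
      _ = C * k ^ 2 * t := by rw [pow_two, ← abs_mul_abs_self k]; ring
  have := quad_bound hgdiff h0 hb
  have h8 : g 1 = ψ (a + k) - ψ a - k * deriv ψ a := by simp [hgdef]
  rw [h8] at this
  linarith [this]

private lemma quad_arith (C2 Δ sΔ a b : ℝ) (hC2 : 0 ≤ C2) (hΔ : 0 ≤ Δ)
    (hsΔ : 0 ≤ sΔ) (hss : sΔ * sΔ = Δ) (hΔle : Δ ≤ sΔ) (ha : 0 ≤ a) (hb : 0 ≤ b) :
    C2 * (Δ ^ 2 * b ^ 2) / 2 + Δ * b * (C2 * (sΔ * a))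
      ≤ C2 * (Δ * sΔ) * (1 / 2 * a ^ 2 + b ^ 2) := by
  have h1 : C2 * (Δ ^ 2 * b ^ 2) / 2 ≤ C2 * (Δ * sΔ) * (b ^ 2 / 2) := by
    have : Δ ^ 2 ≤ Δ * sΔ := by nlinarith
    nlinarith [sq_nonneg b, mul_nonneg hC2 (sq_nonneg b)]
  have h2 : Δ * b * (C2 * (sΔ * a)) ≤ C2 * (Δ * sΔ) * (a ^ 2 / 2 + b ^ 2 / 2) := by
    have hab : a * b ≤ a ^ 2 / 2 + b ^ 2 / 2 := by nlinarith [sq_nonneg (a - b)]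
    have hpos : 0 ≤ C2 * (Δ * sΔ) := by positivity
    nlinarith [mul_le_mul_of_nonneg_left hab hpos]
  nlinarith

theorem stmt_10 {Ω : Type*} (E : (Ω → ℝ) → ℝ)
    (hmono : ∀ X Y : Ω → ℝ, (∀ ω, X ω ≤ Y ω) → E X ≤ E Y)
    (hconst : ∀ c : ℝ, E (fun _ => c) = c)
    (hsub : ∀ X Y : Ω → ℝ, E (fun ω => X ω + Y ω) ≤ E X + E Y)
    (hpos : ∀ lam : ℝ, 0 ≤ lam → ∀ X : Ω → ℝ, E (fun ω => lam * X ω) = lam * E X)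
    (X Y : Ω → ℝ)
    (hX0 : E X = 0) (hX0' : E (fun ω => -X ω) = 0)
    (α : ℝ) (hα0 : 0 < α) (hα1 : α < 1)
    (MX2α MX2 MY2 : ℝ)
    (hMX2α : E (fun ω => |X ω| ^ (2 + α)) = MX2α)
    (hMX2 : E (fun ω => |X ω| ^ 2) = MX2)
    (hMY2 : E (fun ω => |Y ω| ^ 2) = MY2)
    (ψ : ℝ → ℝ) (hψ : ContDiff ℝ 2 ψ)
    (Cψ : ℝ) (hψbdd : ∀ z, |ψ z| ≤ Cψ ∧ |deriv ψ z| ≤ Cψ ∧ |deriv (deriv ψ) z| ≤ Cψ)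
    (Hα : ℝ)
    (hHα : ∀ z w, |deriv (deriv ψ) z - deriv (deriv ψ) w| ≤ Hα * |z - w| ^ α)
    (C2 : ℝ) (hC2 : ∀ z, |deriv (deriv ψ) z| ≤ C2)
    (Δ : ℝ) (hΔ0 : 0 < Δ) (hΔ1 : Δ < 1) (x : ℝ) :
    |(E (fun ω => ψ (x + Real.sqrt Δ * X ω + Δ * Y ω)) - ψ x) / Δ
        - E (fun ω => deriv ψ x * Y ω + (1 / 2) * deriv (deriv ψ) x * (X ω) ^ 2)|
      ≤ Δ ^ (α / 2) * Hα * MX2α + Real.sqrt Δ * C2 * (MX2 + MY2) := by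
  -- basic facts
  have hψd1 : Differentiable ℝ ψ := hψ.differentiable (by norm_num)
  have hψd2 : Differentiable ℝ (deriv ψ) := by
    have h2 : ContDiff ℝ (1 + 1 : ℕ) ψ := by exact_mod_cast hψ
    exact ((contDiff_succ_iff_deriv (n := 1)).mp (by norm_num; exact hψ)).2.2.differentiable (by norm_num)
  have hHα0 : 0 ≤ Hα := by
    have h1 := hHα 1 0
    have h2 := abs_nonneg (deriv (deriv ψ) 1 - deriv (deriv ψ) 0)
    simp [Real.one_rpow] at h1
    linarith
  have hC20 : 0 ≤ C2 := le_trans (abs_nonneg _) (hC2 0)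
  have hsΔ0 : 0 < Real.sqrt Δ := Real.sqrt_pos.mpr hΔ0
  have hsΔ1 : Real.sqrt Δ ≤ 1 := by
    rw [show (1:ℝ) = Real.sqrt 1 by simp]
    exact Real.sqrt_le_sqrt hΔ1.le
  have hΔs : Real.sqrt Δ * Real.sqrt Δ = Δ := Real.mul_self_sqrt hΔ0.le
  -- abbreviations
  set f : Ω → ℝ := fun ω => ψ (x + Real.sqrt Δ * X ω + Δ * Y ω) with hf
  set g : Ω → ℝ := fun ω => deriv ψ x * Y ω + (1 / 2) * deriv (deriv ψ) x * (X ω) ^ 2 with hg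
  set c1 : ℝ := Hα * (Δ * Δ ^ (α / 2)) with hc1
  set c2 : ℝ := C2 * (Δ * Real.sqrt Δ) with hc2
  have hc10 : 0 ≤ c1 := by positivity
  have hc20 : 0 ≤ c2 := by positivity
  set Bnd : Ω → ℝ := fun ω => c1 * |X ω| ^ (2 + α) + c2 * ((1/2) * |X ω| ^ 2 + |Y ω| ^ 2)
    with hBnd
  set h : Ω → ℝ :=
    fun ω => ψ x + (Real.sqrt Δ * deriv ψ x * X ω + Δ * g ω) with hh
  -- pointwise bound
  have hpt : ∀ ω, |f ω - h ω| ≤ Bnd ω := by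
    intro ω
    set s : ℝ := Real.sqrt Δ * X ω with hs
    set k : ℝ := Δ * Y ω with hk
    have hA := holder_taylor2 hψd1 hψd2 hα0.le hHα0 hHα x s
    have hB1 := taylor1_half hψd1 hψd2 hC2 (x + s) k
    have hB2 : |deriv ψ (x + s) - deriv ψ x| ≤ C2 * |s| := by
      have := abs_sub_le_of_deriv_bound hψd2 hC2 x (x + s)
      simpa using this
    have hs2 : s ^ 2 = Δ * X ω ^ 2 := by rw [hs, mul_pow, Real.sq_sqrt hΔ0.le]
    have hdecomp : f ω - h ω =
        (ψ (x + s + k) - ψ (x + s) - k * deriv ψ (x + s))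
        + k * (deriv ψ (x + s) - deriv ψ x)
        + (ψ (x + s) - ψ x - s * deriv ψ x - s ^ 2 / 2 * deriv (deriv ψ) x) := by
      simp only [hf, hh, hg, hs, hk]
      rw [hs2]
      ring
    have habs : |f ω - h ω| ≤ C2 * k ^ 2 / 2 + |k| * (C2 * |s|)
        + Hα * |s| ^ α * |s| * |s| := by
      rw [hdecomp]
      have t1 := abs_add_le (ψ (x + s + k) - ψ (x + s) - k * deriv ψ (x + s)
        + k * (deriv ψ (x + s) - deriv ψ x))
        (ψ (x + s) - ψ x - s * deriv ψ x - s ^ 2 / 2 * deriv (deriv ψ) x)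
      have t2 := abs_add_le (ψ (x + s + k) - ψ (x + s) - k * deriv ψ (x + s))
        (k * (deriv ψ (x + s) - deriv ψ x))
      have t3 : |k * (deriv ψ (x + s) - deriv ψ x)| ≤ |k| * (C2 * |s|) := by
        rw [abs_mul]
        exact mul_le_mul_of_nonneg_left hB2 (abs_nonneg k)
      linarith
    have habsS : |s| = Real.sqrt Δ * |X ω| := by
      rw [hs, abs_mul, abs_of_nonneg hsΔ0.le]
    have habsK : |k| = Δ * |Y ω| := by
      rw [hk, abs_mul, abs_of_pos hΔ0]
    have hXa : |X ω| ^ 2 = X ω ^ 2 := sq_abs _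
    have hYa : |Y ω| ^ 2 = Y ω ^ 2 := sq_abs _
    have hterm1 : Hα * |s| ^ α * |s| * |s| = c1 * |X ω| ^ (2 + α) := by
      have e1 : |s| ^ α = Δ ^ (α / 2) * |X ω| ^ α := by
        rw [habsS, Real.mul_rpow hsΔ0.le (abs_nonneg _)]
        congr 1
        rw [Real.sqrt_eq_rpow, ← Real.rpow_mul hΔ0.le]
        congr 1
        ring
      have e2 : |X ω| ^ (2 + α) = |X ω| ^ (2:ℝ) * |X ω| ^ α :=
        Real.rpow_add' (abs_nonneg _) (by positivity)
      have e3 : |X ω| ^ (2:ℝ) = |X ω| * |X ω| := by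
        rw [show (2:ℝ) = ((2:ℕ):ℝ) by norm_num, Real.rpow_natCast, pow_two]
      rw [e1, e2, e3, habsS, hc1]
      calc Hα * (Δ ^ (α / 2) * |X ω| ^ α) * (Real.sqrt Δ * |X ω|) * (Real.sqrt Δ * |X ω|)
          = Hα * (Real.sqrt Δ * Real.sqrt Δ) * Δ ^ (α / 2) * |X ω| ^ α
            * (|X ω| * |X ω|) := by ring
        _ = Hα * (Δ * Δ ^ (α / 2)) * (|X ω| * |X ω| * |X ω| ^ α) := by rw [hΔs]; ring
    have hkk : k ^ 2 = Δ ^ 2 * Y ω ^ 2 := by rw [hk]; ring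
    have hrest : C2 * k ^ 2 / 2 + |k| * (C2 * |s|)
        ≤ c2 * ((1/2) * |X ω| ^ 2 + |Y ω| ^ 2) := by
      rw [habsK, habsS, hkk, hc2, ← hYa]
      have hΔle : Δ ≤ Real.sqrt Δ :=
        calc Δ = Real.sqrt Δ * Real.sqrt Δ := hΔs.symm
          _ ≤ Real.sqrt Δ * 1 := mul_le_mul_of_nonneg_left hsΔ1 hsΔ0.le
          _ = Real.sqrt Δ := mul_one _
      exact quad_arith C2 Δ (Real.sqrt Δ) (|X ω|) (|Y ω|) hC20 hΔ0.le hsΔ0.le hΔs hΔle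
        (abs_nonneg _) (abs_nonneg _)
    calc |f ω - h ω| ≤ C2 * k ^ 2 / 2 + |k| * (C2 * |s|) + Hα * |s| ^ α * |s| * |s| := habs
      _ = (C2 * k ^ 2 / 2 + |k| * (C2 * |s|)) + c1 * |X ω| ^ (2 + α) := by
          rw [hterm1]
      _ ≤ c2 * ((1/2) * |X ω| ^ 2 + |Y ω| ^ 2) + c1 * |X ω| ^ (2 + α) := by linarith
      _ = Bnd ω := by simp only [hBnd]; ring
  -- sublinear expectation facts
  have e0 : E (fun _ : Ω => (0:ℝ)) = 0 := hconst 0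
  have econst_add : ∀ (Z : Ω → ℝ) (c : ℝ), E (fun ω => c + Z ω) = c + E Z := by
    intro Z c
    apply le_antisymm
    · have h1 := hsub (fun _ => c) Z
      rw [hconst] at h1
      exact h1
    · have h1 := hsub (fun ω => c + Z ω) (fun _ => -c)
      rw [hconst] at h1
      have h2 : E (fun ω => (c + Z ω) + -c) = E Z := by
        congr 1
        funext ω
        ring
      rw [h2] at h1
      linarith
  have ecX : ∀ c : ℝ, E (fun ω => c * X ω) = 0 := by
    intro c
    rcases le_or_gt 0 c with hc | hc
    · rw [hpos c hc X, hX0, mul_zero]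
    · have h2 : (fun ω => c * X ω) = (fun ω => (-c) * (-X ω)) := by
        funext ω
        ring
      rw [h2]
      have h3 := hpos (-c) (by linarith) (fun ω => -X ω)
      rw [hX0', mul_zero] at h3
      exact h3
  have ekill : ∀ (W : Ω → ℝ) (c : ℝ), E (fun ω => c * X ω + W ω) = E W := by
    intro W c
    apply le_antisymm
    · have h1 := hsub (fun ω => c * X ω) W
      rw [ecX c, zero_add] at h1
      exact h1
    · have h1 := hsub (fun ω => c * X ω + W ω) (fun ω => (-c) * X ω)
      rw [ecX (-c), add_zero] at h1
      have h2 : (fun ω => (c * X ω + W ω) + (-c) * X ω) = W := by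
        funext ω
        ring
      rw [h2] at h1
      exact h1
  -- compute E h
  have eh : E h = ψ x + Δ * E g := by
    have h1 : E h = ψ x + E (fun ω => Real.sqrt Δ * deriv ψ x * X ω + Δ * g ω) :=
      econst_add (fun ω => Real.sqrt Δ * deriv ψ x * X ω + Δ * g ω) (ψ x)
    have h2 : E (fun ω => Real.sqrt Δ * deriv ψ x * X ω + Δ * g ω) = E (fun ω => Δ * g ω) :=
      ekill (fun ω => Δ * g ω) (Real.sqrt Δ * deriv ψ x)
    have h3 : E (fun ω => Δ * g ω) = Δ * E g := hpos Δ hΔ0.le g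
    rw [h1, h2, h3]
  -- sandwich
  have hEB : |E f - E h| ≤ E Bnd := by
    have hup : E f ≤ E h + E Bnd := by
      have h1 : E f ≤ E (fun ω => h ω + Bnd ω) :=
        hmono f (fun ω => h ω + Bnd ω) (fun ω => by
          have h9 := abs_le.mp (hpt ω)
          linarith [h9.2])
      exact le_trans h1 (hsub h Bnd)
    have hdown : E h ≤ E f + E Bnd := by
      have h1 : E h ≤ E (fun ω => f ω + Bnd ω) :=
        hmono h (fun ω => f ω + Bnd ω) (fun ω => by
          have h9 := abs_le.mp (hpt ω)
          linarith [h9.1])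
      exact le_trans h1 (hsub f Bnd)
    rw [abs_le]
    constructor <;> linarith
  -- bound E Bnd
  have hMX20 : 0 ≤ MX2 := by
    rw [← hMX2]
    have h1 := hmono (fun _ => (0:ℝ)) (fun ω => |X ω| ^ 2) (fun ω => by positivity)
    rw [e0] at h1
    exact h1
  have hEBnd : E Bnd ≤ c1 * MX2α + c2 * ((1/2) * MX2 + MY2) := by
    have h1 : E Bnd ≤ E (fun ω => c1 * |X ω| ^ (2 + α))
        + E (fun ω => c2 * ((1/2) * |X ω| ^ 2 + |Y ω| ^ 2)) :=
      hsub (fun ω => c1 * |X ω| ^ (2 + α)) (fun ω => c2 * ((1/2) * |X ω| ^ 2 + |Y ω| ^ 2))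
    have h2 : E (fun ω => c1 * |X ω| ^ (2 + α)) = c1 * MX2α := by
      rw [hpos c1 hc10 (fun ω => |X ω| ^ (2 + α)), hMX2α]
    have h3 : E (fun ω => c2 * ((1/2) * |X ω| ^ 2 + |Y ω| ^ 2))
        ≤ c2 * ((1/2) * MX2 + MY2) := by
      rw [hpos c2 hc20 (fun ω => (1/2) * |X ω| ^ 2 + |Y ω| ^ 2)]
      apply mul_le_mul_of_nonneg_left _ hc20
      have h4 : E (fun ω => (1/2) * |X ω| ^ 2 + |Y ω| ^ 2)
          ≤ E (fun ω => (1/2) * |X ω| ^ 2) + E (fun ω => |Y ω| ^ 2) :=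
        hsub (fun ω => (1/2) * |X ω| ^ 2) (fun ω => |Y ω| ^ 2)
      have h5 : E (fun ω => (1/2) * |X ω| ^ 2) = (1/2) * MX2 := by
        rw [hpos (1/2) (by norm_num) (fun ω => |X ω| ^ 2), hMX2]
      rw [h5, hMY2] at h4
      exact h4
    calc E Bnd ≤ E (fun ω => c1 * |X ω| ^ (2 + α))
        + E (fun ω => c2 * ((1/2) * |X ω| ^ 2 + |Y ω| ^ 2)) := h1
      _ ≤ c1 * MX2α + c2 * ((1/2) * MX2 + MY2) := by rw [h2]; linarith
  -- final assembly
  have hfinal : |E f - ψ x - Δ * E g|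
      ≤ Δ * (Δ ^ (α / 2) * Hα * MX2α + Real.sqrt Δ * C2 * (MX2 + MY2)) := by
    have h1 : E f - ψ x - Δ * E g = E f - E h := by rw [eh]; ring
    rw [h1]
    calc |E f - E h| ≤ E Bnd := hEB
      _ ≤ c1 * MX2α + c2 * ((1/2) * MX2 + MY2) := hEBnd
      _ ≤ Δ * (Δ ^ (α / 2) * Hα * MX2α + Real.sqrt Δ * C2 * (MX2 + MY2)) := by
          rw [hc1, hc2]
          have hrp : (0:ℝ) ≤ Δ ^ (α / 2) := Real.rpow_nonneg hΔ0.le _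
          nlinarith [mul_nonneg (mul_nonneg hC20 hΔ0.le) hsΔ0.le,
            mul_le_mul_of_nonneg_left hMX20
              (mul_nonneg (mul_nonneg hC20 hΔ0.le) hsΔ0.le)]
  have h2 : (E f - ψ x) / Δ - E g = (E f - ψ x - Δ * E g) / Δ := by
    field_simp
  rw [h2, abs_div, abs_of_pos hΔ0, div_le_iff₀ hΔ0]
  linarith [hfinal]
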